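/- Let F : ℝ^d × ℝ^d → ℝ be nonnegative and twice continuously differentiable, and suppose F(s·r, θ) = s⁴·F(r,θ) for all s ∈ ℝ and all (r,θ). Let L > 0 satisfy ‖∇²F(r,θ)‖ ≤ L whenever ‖r‖ ≤ 2. Fix x = (r,θ) with ‖r‖ = 1 and F(x) > 0, and suppose there exist μ > 0 and α ∈ [0,2) such that ‖∇F(x)‖² ≥ 4μ·F(x)^α (uniform Kurdyka–Łojasiewicz condition at x) and F(x) ≤ (μ/16)^{1/(2−α)}. Let a > 0 satisfy a ≤ 2/L, a·‖∇F(x)‖ ≤ 1, and 16·a·F(x) < 1. Write x − a·∇F(x) = (r_y, θ_y). Then ‖r_y‖² ≥ 1 − 8a·F(x) > 0, so r_y ≠ 0, and the normalized gradient-descent iterate x⁺ = (r_y/‖r_y‖, θ_y) satisfies F(x⁺) ≤ (1 − μ·a·F(x)^{α−1})·F(x). -/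

import Mathlib

noncomputable section

/-- The point of `ℝ^d × ℝ^d` (realized as the Euclidean space indexed by `Fin d ⊕ Fin d`)
with radial part `r` and angular part `θ`. -/
def toE {d : ℕ} (r θ : Fin d → ℝ) : EuclideanSpace ℝ (Fin d ⊕ Fin d) :=
  (EuclideanSpace.equiv (Fin d ⊕ Fin d) ℝ).symm (Sum.elim r θ)

/-- The radial part of a point. -/
def rOf {d : ℕ} (x : EuclideanSpace ℝ (Fin d ⊕ Fin d)) (i : Fin d) : ℝ :=
  EuclideanSpace.equiv (Fin d ⊕ Fin d) ℝ x (Sum.inl i)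

/-- The angular part of a point. -/
def thOf {d : ℕ} (x : EuclideanSpace ℝ (Fin d ⊕ Fin d)) (i : Fin d) : ℝ :=
  EuclideanSpace.equiv (Fin d ⊕ Fin d) ℝ x (Sum.inr i)

end

noncomputable section Helpers

variable {d : ℕ}

lemma toE_rOf (z : EuclideanSpace ℝ (Fin d ⊕ Fin d)) : toE (rOf z) (thOf z) = z := by
  ext j; cases j <;> rfl

/-- scaling of the radial part by `c` -/
def Sc (c : ℝ) (z : EuclideanSpace ℝ (Fin d ⊕ Fin d)) : EuclideanSpace ℝ (Fin d ⊕ Fin d) :=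
  toE (c • rOf z) (thOf z)

lemma Sc_add_smul (c t : ℝ) (p v : EuclideanSpace ℝ (Fin d ⊕ Fin d)) :
    Sc c p + t • Sc c v = Sc c (p + t • v) := by
  ext j
  cases j <;> simp [Sc, toE, rOf, thOf, EuclideanSpace.equiv] <;> ring

lemma Sc_rsum (c : ℝ) (z : EuclideanSpace ℝ (Fin d ⊕ Fin d)) :
    ∑ i, rOf (Sc c z) i ^ 2 = c ^ 2 * ∑ i, rOf z i ^ 2 := by
  simp [Sc, toE, rOf, thOf, Finset.mul_sum, mul_pow]

lemma Sc_normsq (c : ℝ) (z : EuclideanSpace ℝ (Fin d ⊕ Fin d)) :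
    ‖Sc c z‖ ^ 2 = c ^ 2 * ∑ i, rOf z i ^ 2 + ∑ i, thOf z i ^ 2 := by
  rw [EuclideanSpace.norm_eq, Real.sq_sqrt (by positivity), Fintype.sum_sum_type]
  simp [Sc, toE, rOf, thOf, Real.norm_eq_abs, sq_abs, Finset.mul_sum, mul_pow, abs_mul]

lemma normsq_split (w : EuclideanSpace ℝ (Fin d ⊕ Fin d)) :
    ‖w‖ ^ 2 = ∑ i, rOf w i ^ 2 + ∑ i, thOf w i ^ 2 := by
  rw [EuclideanSpace.norm_eq, Real.sq_sqrt (by positivity), Fintype.sum_sum_type]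
  simp [rOf, thOf, Real.norm_eq_abs, sq_abs]

variable {F : EuclideanSpace ℝ (Fin d ⊕ Fin d) → ℝ}

lemma lineDeriv1' (hF : Differentiable ℝ F) (p v : EuclideanSpace ℝ (Fin d ⊕ Fin d))
    (t : ℝ) :
    HasDerivAt (fun s => F (p + s • v)) (fderiv ℝ F (p + t • v) v) t := by
  have hpath : HasDerivAt (fun s : ℝ => p + s • v) v t := by
    simpa using ((hasDerivAt_id t).smul_const v).const_add p
  exact ((hF (p + t • v)).hasFDerivAt.comp_hasDerivAt t hpath)

lemma lineDeriv2' (hF : Differentiable ℝ (fderiv ℝ F))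
    (p v : EuclideanSpace ℝ (Fin d ⊕ Fin d)) (t : ℝ) :
    HasDerivAt (fun s => fderiv ℝ F (p + s • v) v)
      ((fderiv ℝ (fderiv ℝ F) (p + t • v) v) v) t := by
  have hpath : HasDerivAt (fun s : ℝ => p + s • v) v t := by
    simpa using ((hasDerivAt_id t).smul_const v).const_add p
  have h1 : HasDerivAt (fun s => fderiv ℝ F (p + s • v))
      ((fderiv ℝ (fderiv ℝ F) (p + t • v)) v) t :=
    (hF (p + t • v)).hasFDerivAt.comp_hasDerivAt t hpath
  simpa using h1.clm_apply (hasDerivAt_const t v)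

/-- scaling of the second derivative quadratic form under radial scaling, from homogeneity -/
lemma Qscale (hF1 : Differentiable ℝ F) (hF2 : Differentiable ℝ (fderiv ℝ F))
    (hhomE : ∀ (c : ℝ) (z : EuclideanSpace ℝ (Fin d ⊕ Fin d)), F (Sc c z) = c ^ 4 * F z)
    (c : ℝ) (p v : EuclideanSpace ℝ (Fin d ⊕ Fin d)) :
    (fderiv ℝ (fderiv ℝ F) (Sc c p) (Sc c v)) (Sc c v)
      = c ^ 4 * (fderiv ℝ (fderiv ℝ F) p v) v := by
  have key : (fun s : ℝ => F (Sc c p + s • Sc c v)) = fun s => c ^ 4 * F (p + s • v) := by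
    funext s; rw [Sc_add_smul, hhomE]
  have d1 : ∀ t : ℝ, fderiv ℝ F (Sc c p + t • Sc c v) (Sc c v)
      = c ^ 4 * fderiv ℝ F (p + t • v) v := by
    intro t
    have hL := lineDeriv1' hF1 (Sc c p) (Sc c v) t
    rw [key] at hL
    exact hL.unique ((lineDeriv1' hF1 p v t).const_mul (c ^ 4))
  have key2 : (fun s : ℝ => fderiv ℝ F (Sc c p + s • Sc c v) (Sc c v))
      = fun s => c ^ 4 * fderiv ℝ F (p + s • v) v := funext d1
  have hL2 := lineDeriv2' hF2 (Sc c p) (Sc c v) 0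
  rw [key2] at hL2
  simpa using hL2.unique ((lineDeriv2' hF2 p v 0).const_mul (c ^ 4))

lemma taylor_bound (f f' f'' : ℝ → ℝ) (a K : ℝ) (ha : 0 ≤ a)
    (hd1 : ∀ t, HasDerivAt f (f' t) t) (hd2 : ∀ t, HasDerivAt f' (f'' t) t)
    (hK : ∀ t ∈ Set.Icc 0 a, f'' t ≤ K) :
    f a ≤ f 0 + f' 0 * a + K * a ^ 2 / 2 := by
  set g : ℝ → ℝ := fun t => f' 0 + K * t - f' t with hg
  have hg' : ∀ t, HasDerivAt g (K - f'' t) t := fun t => by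
    have h0 := (((hasDerivAt_id t).const_mul K).const_add (f' 0)).sub (hd2 t)
    rw [mul_one] at h0
    exact h0
  have hgmono : MonotoneOn g (Set.Icc 0 a) := by
    apply monotoneOn_of_deriv_nonneg (convex_Icc 0 a)
    · exact Continuous.continuousOn (by
        exact continuous_const.add (continuous_const.mul continuous_id) |>.sub
          (continuous_iff_continuousAt.2 fun s => (hd2 s).continuousAt))
    · intro s hs
      exact ((hg' s).differentiableAt).differentiableWithinAt
    · intro s hs
      rw [(hg' s).deriv]
      have : s ∈ Set.Icc 0 a := Set.mem_of_mem_of_subset hs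
        (by rw [interior_Icc]; exact Set.Ioo_subset_Icc_self)
      linarith [hK s this]
  have hgnn : ∀ t ∈ Set.Icc 0 a, 0 ≤ g t := by
    intro t ht
    have := hgmono (Set.left_mem_Icc.2 ha) ht ht.1
    simpa [hg] using this
  set h : ℝ → ℝ := fun t => f 0 + f' 0 * t + K * t ^ 2 / 2 - f t with hh
  have hh' : ∀ t, HasDerivAt h (f' 0 + K * t - f' t) t := fun t => by
    have : HasDerivAt (fun t : ℝ => f 0 + f' 0 * t + K * t ^ 2 / 2)
        (f' 0 + K * t) t := by
      have h1 : HasDerivAt (fun t : ℝ => f' 0 * t) (f' 0) t := by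
        simpa using (hasDerivAt_id t).const_mul (f' 0)
      have h2 : HasDerivAt (fun t : ℝ => K * t ^ 2 / 2) (K * t) t := by
        have := ((hasDerivAt_pow 2 t).const_mul K).div_const 2
        have e : K * (((2:ℕ):ℝ) * t ^ (2 - 1)) / 2 = K * t := by push_cast; ring
        rw [e] at this
        exact this
      exact (h1.const_add (f 0)).add h2
    exact this.sub (hd1 t)
  have hhmono : MonotoneOn h (Set.Icc 0 a) := by
    apply monotoneOn_of_deriv_nonneg (convex_Icc 0 a)
    · exact Continuous.continuousOn
        (continuous_iff_continuousAt.2 fun s => (hh' s).continuousAt)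
    · intro s hs; exact ((hh' s).differentiableAt).differentiableWithinAt
    · intro s hs
      rw [(hh' s).deriv]
      exact hgnn s (Set.mem_of_mem_of_subset hs
        (by rw [interior_Icc]; exact Set.Ioo_subset_Icc_self))
  have := hhmono (Set.left_mem_Icc.2 ha) (Set.right_mem_Icc.2 ha) ha
  simp only [hh] at this
  nlinarith [this]

lemma neg_quad (A : EuclideanSpace ℝ (Fin d ⊕ Fin d) →L[ℝ]
    (EuclideanSpace ℝ (Fin d ⊕ Fin d) →L[ℝ] ℝ)) (g : EuclideanSpace ℝ (Fin d ⊕ Fin d)) :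
    (A (-g)) (-g) = (A g) g := by
  simp only [map_neg, ContinuousLinearMap.neg_apply, neg_neg]

lemma quad_bound (hF1 : Differentiable ℝ F) (hF2 : Differentiable ℝ (fderiv ℝ F))
    (hhomE : ∀ (c : ℝ) (z : EuclideanSpace ℝ (Fin d ⊕ Fin d)), F (Sc c z) = c ^ 4 * F z)
    (L : ℝ) (hLpos : 0 < L)
    (hHess : ∀ z : EuclideanSpace ℝ (Fin d ⊕ Fin d),
      Real.sqrt (∑ i, rOf z i ^ 2) ≤ 2 → ‖fderiv ℝ (fderiv ℝ F) z‖ ≤ L)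
    (p g : EuclideanSpace ℝ (Fin d ⊕ Fin d)) (mt : ℝ)
    (hmteq : ∑ i, rOf p i ^ 2 = mt) (hmtpos : 0 < mt) (hmt2 : mt ≤ 2) :
    (fderiv ℝ (fderiv ℝ F) p g) g
      ≤ L * ((∑ i, rOf g i ^ 2) / 2 + (∑ i, thOf g i ^ 2) / 4) := by
  set Gr : ℝ := ∑ i, rOf g i ^ 2 with hGr
  set Gθ : ℝ := ∑ i, thOf g i ^ 2 with hGθ
  have hGrnn : 0 ≤ Gr := by positivity
  have hGθnn : 0 ≤ Gθ := by positivity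
  set ρ : ℝ := Real.sqrt mt with hρ
  have hρpos : 0 < ρ := Real.sqrt_pos.2 hmtpos
  have hρsq : ρ ^ 2 = mt := Real.sq_sqrt hmtpos.le
  set c : ℝ := 2 / ρ with hc
  have hcpos : 0 < c := by positivity
  have hc2 : c ^ 2 * mt = 4 := by
    rw [hc, div_pow, ← hρsq]; field_simp; try norm_num
  have h4 : Real.sqrt (4 : ℝ) = 2 := by
    rw [show (4 : ℝ) = 2 ^ 2 by norm_num, Real.sqrt_sq (by norm_num : (0:ℝ) ≤ 2)]
  have hz : Real.sqrt (∑ i, rOf (Sc c p) i ^ 2) ≤ 2 := by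
    rw [Sc_rsum, hmteq, hc2, h4]
  have hHz := hHess (Sc c p) hz
  have hscale := Qscale hF1 hF2 hhomE c p g
  have hwn : ‖Sc c g‖ ^ 2 = c ^ 2 * Gr + Gθ := by rw [Sc_normsq, ← hGr, ← hGθ]
  have hQz : (fderiv ℝ (fderiv ℝ F) (Sc c p) (Sc c g)) (Sc c g)
      ≤ L * (c ^ 2 * Gr + Gθ) := by
    set A := fderiv ℝ (fderiv ℝ F) (Sc c p) with hA
    set w := Sc c g with hw
    have h1 : (A w) w ≤ ‖(A w) w‖ := by
      rw [Real.norm_eq_abs]; exact le_abs_self _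
    have h2 : ‖(A w) w‖ ≤ ‖A w‖ * ‖w‖ := (A w).le_opNorm w
    have h3 : ‖A w‖ ≤ ‖A‖ * ‖w‖ := A.le_opNorm w
    have h4 : ‖A w‖ * ‖w‖ ≤ (‖A‖ * ‖w‖) * ‖w‖ :=
      mul_le_mul_of_nonneg_right h3 (norm_nonneg w)
    have h5 : (‖A‖ * ‖w‖) * ‖w‖ = ‖A‖ * ‖w‖ ^ 2 := by ring
    have h6 : ‖A‖ * ‖w‖ ^ 2 ≤ L * (c ^ 2 * Gr + Gθ) := by
      rw [hwn]
      have hwnn : 0 ≤ c ^ 2 * Gr + Gθ := by positivity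
      exact mul_le_mul hHz le_rfl hwnn hLpos.le
    linarith
  have hc4 : (0 : ℝ) < c ^ 4 := by positivity
  have hQp : (fderiv ℝ (fderiv ℝ F) p g) g ≤ L * (c ^ 2 * Gr + Gθ) / c ^ 4 := by
    rw [le_div_iff₀ hc4]
    calc (fderiv ℝ (fderiv ℝ F) p g) g * c ^ 4
        = c ^ 4 * (fderiv ℝ (fderiv ℝ F) p g) g := by ring
      _ = (fderiv ℝ (fderiv ℝ F) (Sc c p) (Sc c g)) (Sc c g) := hscale.symm
      _ ≤ L * (c ^ 2 * Gr + Gθ) := hQz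
  refine hQp.trans ?_
  have hc2' : c ^ 2 = 4 / mt := by
    field_simp at hc2 ⊢; linarith
  have hrw : L * (c ^ 2 * Gr + Gθ) / c ^ 4
      = L * ((mt / 4) * Gr + (mt ^ 2 / 16) * Gθ) := by
    rw [show c ^ 4 = (c ^ 2) ^ 2 by ring, hc2']
    field_simp
    ring
  rw [hrw]
  have hmt4 : mt ^ 2 ≤ 4 := by nlinarith
  have : (mt / 4) * Gr + (mt ^ 2 / 16) * Gθ ≤ Gr / 2 + Gθ / 4 := by
    nlinarith [mul_le_mul_of_nonneg_right hmt2 hGrnn, mul_le_mul_of_nonneg_right hmt4 hGθnn]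
  exact mul_le_mul_of_nonneg_left this hLpos.le

lemma descent (hF1 : Differentiable ℝ F) (hF2 : Differentiable ℝ (fderiv ℝ F))
    (x g : EuclideanSpace ℝ (Fin d ⊕ Fin d)) (a K : ℝ) (ha : 0 ≤ a)
    (hK : ∀ t ∈ Set.Icc (0 : ℝ) a, (fderiv ℝ (fderiv ℝ F) (x - t • g) g) g ≤ K) :
    F (x - a • g) ≤ F x - fderiv ℝ F x g * a + K * a ^ 2 / 2 := by
  have hpt : ∀ t : ℝ, x + t • (-g) = x - t • g := fun t => by
    rw [smul_neg, ← sub_eq_add_neg]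
  have key := taylor_bound (fun s => F (x + s • (-g)))
    (fun s => fderiv ℝ F (x + s • (-g)) (-g))
    (fun s => (fderiv ℝ (fderiv ℝ F) (x + s • (-g)) (-g)) (-g)) a K ha
    (fun t => lineDeriv1' hF1 x (-g) t) (fun t => lineDeriv2' hF2 x (-g) t)
    (by
      intro t ht
      show (fderiv ℝ (fderiv ℝ F) (x + t • (-g)) (-g)) (-g) ≤ K
      rw [hpt t, neg_quad]
      exact hK t ht)
  replace key : F (x + a • (-g)) ≤
      F (x + (0:ℝ) • (-g)) + (fderiv ℝ F (x + (0:ℝ) • (-g))) (-g) * a + K * a ^ 2 / 2 := key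
  rw [hpt a] at key
  simp only [zero_smul, add_zero, map_neg] at key
  linarith [key]

section Arith
lemma arith_haG {a n : ℝ} (ha : 0 < a) (hn : 0 ≤ n) (h : a * n ≤ 1) : a ^ 2 * n ^ 2 ≤ 1 := by
  have h1 : 0 ≤ a * n := mul_nonneg ha.le hn
  nlinarith [mul_le_mul h h h1 zero_le_one]
lemma arith_hCS {f gr : ℝ} (h : (4 * f) ^ 2 ≤ 1 * gr) : 16 * f ^ 2 ≤ gr := by nlinarith
lemma arith_h2 {a f t : ℝ} (ht0 : 0 ≤ t) (hta : t ≤ a) (hf : 0 < f) (h : 16 * a * f < 1) :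
    4 * f * t ≤ 1 / 4 := by nlinarith
lemma arith_mtpos {f t gr : ℝ} (h2 : 4 * f * t ≤ 1 / 4) (hterm : 0 ≤ t ^ 2 * (gr - 16 * f ^ 2)) :
    0 < 1 - 8 * f * t + t ^ 2 * gr := by nlinarith [sq_nonneg (1 - 4 * f * t)]
lemma arith_mt2 {f t a gr gθ : ℝ} (ht0 : 0 ≤ t) (hta : t ≤ a) (hgr : 0 ≤ gr) (hgθ : 0 ≤ gθ)
    (hf : 0 ≤ f) (hG : a ^ 2 * (gr + gθ) ≤ 1) : 1 - 8 * f * t + t ^ 2 * gr ≤ 2 := by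
  have h1 : t ^ 2 ≤ a ^ 2 := by nlinarith
  have h2 : t ^ 2 * gr ≤ a ^ 2 * gr := mul_le_mul_of_nonneg_right h1 hgr
  have h3 : a ^ 2 * gr ≤ a ^ 2 * (gr + gθ) := by nlinarith [sq_nonneg a]
  nlinarith [mul_nonneg ht0 hf]
lemma arith_Ka {l a gr gθ : ℝ} (hal : a * l ≤ 2) (ha : 0 < a) (hgr : 0 ≤ gr) (hgθ : 0 ≤ gθ) :
    l * (gr / 2 + gθ / 4) * a ^ 2 / 2 ≤ a * (gr + gθ) / 2 := by
  have h0 : 0 ≤ a * (gr / 2 + gθ / 4) := by positivity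
  have h1 := mul_le_mul_of_nonneg_right hal h0
  nlinarith [mul_nonneg ha.le hgθ, mul_nonneg ha.le hgr]
lemma arith_Fy {fy fx G a k2 : ℝ} (hd : fy ≤ fx - G * a + k2) (hk : k2 ≤ a * G / 2) :
    fy ≤ fx - a * G / 2 := by linarith
lemma arith_16 {q p μ f : ℝ} (hq : q ≤ μ / 16) (hp : 0 < p) (h3 : f ^ 2 = q * p) :
    16 * f ^ 2 ≤ μ * p := by nlinarith [mul_le_mul_of_nonneg_right hq hp.le]
lemma arith_part2 {a f : ℝ} (ha : 0 < a) (hf : 0 < f) (h : 16 * a * f < 1) :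
    0 < 1 - 8 * a * f := by nlinarith [mul_pos ha hf]
lemma arith_part1 {f a gr m : ℝ} (hm : m = 1 - 8 * f * a + a ^ 2 * gr) (h : 0 ≤ a ^ 2 * gr) :
    1 - 8 * a * f ≤ m := by rw [hm]; linarith
lemma arith_final {fy fx mp G a m : ℝ} (hfy : fy ≤ fx - a * G / 2) (hP : 4 * mp ≤ G)
    (h16 : 16 * fx ^ 2 ≤ mp) (hfynn : 0 ≤ fy) (hm : 1 - 8 * a * fx ≤ m)
    (hq : 0 < 1 - 8 * a * fx) (hfx : 0 < fx) (ha : 0 < a) :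
    fy ≤ m ^ 2 * (fx - a * mp) := by
  have hP' : a * mp ≤ a * G / 4 := by nlinarith [mul_le_mul_of_nonneg_left hP ha.le]
  have h16a : 16 * a * fx ^ 2 ≤ a * mp := by nlinarith [mul_le_mul_of_nonneg_left h16 ha.le]
  have hfyup : fy ≤ fx - a * mp - 16 * a * fx ^ 2 := by linarith
  have hafx2 : 0 ≤ 16 * a * fx ^ 2 := by positivity
  have hFP : 0 ≤ fx - a * mp := by linarith
  have hq2 : (1 - 8 * a * fx) ^ 2 ≤ m ^ 2 := by nlinarith
  have hq2' : 1 - 16 * a * fx ≤ m ^ 2 := by nlinarith [sq_nonneg (a * fx)]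
  have hPnn : 0 ≤ a * mp := le_trans hafx2 h16a
  have hstep : fx - a * mp - 16 * a * fx ^ 2 ≤ (1 - 16 * a * fx) * (fx - a * mp) := by
    nlinarith [mul_nonneg (mul_nonneg (by linarith : (0:ℝ) ≤ 16 * a) hfx.le) hPnn]
  calc fy ≤ fx - a * mp - 16 * a * fx ^ 2 := hfyup
    _ ≤ (1 - 16 * a * fx) * (fx - a * mp) := hstep
    _ ≤ m ^ 2 * (fx - a * mp) := mul_le_mul_of_nonneg_right hq2' hFP
end Arith

end Helpers

set_option maxHeartbeats 2000000 in
/-- one-step contraction of normalized gradient descent: let `F ≥ 0` be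
`C²` on `ℝ^d × ℝ^d` and degree-4 homogeneous in the radial variables, with Hessian bounded
by `L` on `{‖r‖ ≤ 2}`. If `x = (r,θ)` has `‖r‖ = 1`, `F(x) > 0`, satisfies the uniform KL
condition `‖∇F(x)‖² ≥ 4μ F(x)^α` with `F(x) ≤ (μ/16)^{1/(2−α)}`, and the step size `a > 0`
satisfies `a ≤ 2/L`, `a‖∇F(x)‖ ≤ 1` and `16 a F(x) < 1`, then writing
`y = x − a ∇F(x) = (r_y, θ_y)` one has `‖r_y‖² ≥ 1 − 8a F(x) > 0` (so `r_y ≠ 0`), and the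
normalized iterate `x⁺ = (r_y/‖r_y‖, θ_y)` satisfies
`F(x⁺) ≤ (1 − μ a F(x)^{α−1}) F(x)`. -/
theorem statement19 {d : ℕ} (F : EuclideanSpace ℝ (Fin d ⊕ Fin d) → ℝ)
    (hF0 : ∀ x, 0 ≤ F x) (hC2 : ContDiff ℝ 2 F)
    (hhom : ∀ (s : ℝ) (r θ : Fin d → ℝ), F (toE (s • r) θ) = s ^ 4 * F (toE r θ))
    (L : ℝ) (hLpos : 0 < L)
    (hHess : ∀ x : EuclideanSpace ℝ (Fin d ⊕ Fin d),
      Real.sqrt (∑ i, rOf x i ^ 2) ≤ 2 → ‖fderiv ℝ (fderiv ℝ F) x‖ ≤ L)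
    (x : EuclideanSpace ℝ (Fin d ⊕ Fin d))
    (hx1 : ∑ i, rOf x i ^ 2 = 1) (hxpos : 0 < F x)
    (μ α : ℝ) (hμ : 0 < μ) (hα0 : 0 ≤ α) (hα2 : α < 2)
    (hKL : 4 * μ * F x ^ α ≤ ‖gradient F x‖ ^ 2)
    (hsmall : F x ≤ (μ / 16) ^ ((2 - α)⁻¹))
    (a : ℝ) (ha0 : 0 < a) (haL : a ≤ 2 / L)
    (hagrad : a * ‖gradient F x‖ ≤ 1) (haF : 16 * a * F x < 1) :
    1 - 8 * a * F x ≤ ∑ i, rOf (x - a • gradient F x) i ^ 2 ∧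
    0 < 1 - 8 * a * F x ∧
    rOf (x - a • gradient F x) ≠ 0 ∧
    F (toE ((Real.sqrt (∑ i, rOf (x - a • gradient F x) i ^ 2))⁻¹ •
          rOf (x - a • gradient F x))
        (thOf (x - a • gradient F x)))
      ≤ (1 - μ * a * F x ^ (α - 1)) * F x := by
  have hF1 : Differentiable ℝ F := hC2.differentiable (by norm_num)
  have hF2 : Differentiable ℝ (fderiv ℝ F) :=
    (hC2.fderiv_right (m := 1) (by norm_num)).differentiable (by norm_num)
  set g : EuclideanSpace ℝ (Fin d ⊕ Fin d) := gradient F x with hgdef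
  have hhomE : ∀ (c : ℝ) (z : EuclideanSpace ℝ (Fin d ⊕ Fin d)), F (Sc c z) = c ^ 4 * F z := by
    intro c z
    have : F (toE (c • rOf z) (thOf z)) = c ^ 4 * F (toE (rOf z) (thOf z)) := hhom c _ _
    rwa [toE_rOf] at this
  have hgrad_inner : ∀ v : EuclideanSpace ℝ (Fin d ⊕ Fin d),
      (inner ℝ g v : ℝ) = fderiv ℝ F x v := fun v => by
    rw [hgdef, gradient]; exact InnerProductSpace.toDual_symm_apply
  -- Euler identity
  have heuler : ∑ i, rOf x i * rOf g i = 4 * F x := by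
    set vR : EuclideanSpace ℝ (Fin d ⊕ Fin d) := toE (rOf x) (fun _ => 0) with hvR
    have hv : ∀ s : ℝ, x + s • vR = toE ((1 + s) • rOf x) (thOf x) := by
      intro s; ext j
      cases j <;> simp [hvR, toE, rOf, thOf, EuclideanSpace.equiv] <;> ring
    have heq : (fun s : ℝ => F (x + s • vR)) = fun s => (1 + s) ^ 4 * F x := by
      funext s
      rw [hv s, hhom, toE_rOf]
    have hL := lineDeriv1' hF1 x vR 0
    rw [heq] at hL
    have hR : HasDerivAt (fun s : ℝ => (1 + s) ^ 4 * F x) (4 * F x) 0 := by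
      have h1 : HasDerivAt (fun s : ℝ => 1 + s) 1 0 := by
        simpa using (hasDerivAt_id (0 : ℝ)).const_add 1
      have := (h1.pow 4).mul_const (F x)
      norm_num at this
      convert this using 1
    have hux := hL.unique hR
    simp only [zero_smul, add_zero] at hux
    have h2 : fderiv ℝ F x vR = ∑ j, g j * vR j := by
      rw [← hgrad_inner vR]; simp [PiLp.inner_apply, mul_comm]
    rw [h2, Fintype.sum_sum_type] at hux
    have h3 : ∀ i : Fin d, vR (Sum.inr i) = 0 := fun i => rfl
    have h4 : ∀ i : Fin d, vR (Sum.inl i) = rOf x i := fun i => rfl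
    simp only [h3, h4, mul_zero, Finset.sum_const_zero, add_zero] at hux
    rw [← hux]
    exact Finset.sum_congr rfl fun i _ => mul_comm _ _
  set Gr : ℝ := ∑ i, rOf g i ^ 2 with hGr
  set Gθ : ℝ := ∑ i, thOf g i ^ 2 with hGθ
  have hGrnn : 0 ≤ Gr := by positivity
  have hGθnn : 0 ≤ Gθ := by positivity
  have hGsplit : ‖g‖ ^ 2 = Gr + Gθ := normsq_split g
  set G : ℝ := ‖g‖ ^ 2 with hGdef
  have hGnn : 0 ≤ G := by positivity
  -- radial norm along the segment
  have msum : ∀ t : ℝ, ∑ i, rOf (x - t • g) i ^ 2 = 1 - 8 * F x * t + t ^ 2 * Gr := by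
    intro t
    have hco : ∀ i, rOf (x - t • g) i = rOf x i - t * rOf g i := fun i => rfl
    have hexp : ∑ i, rOf (x - t • g) i ^ 2
        = (∑ i, rOf x i ^ 2) - 2 * t * (∑ i, rOf x i * rOf g i)
          + t ^ 2 * (∑ i, rOf g i ^ 2) := by
      rw [Finset.mul_sum, Finset.mul_sum, ← Finset.sum_sub_distrib, ← Finset.sum_add_distrib]
      exact Finset.sum_congr rfl fun i _ => by rw [hco]; ring
    rw [hexp, hx1, heuler]; ring
  have hGRθ : G = Gr + Gθ := hGsplit
  have haG : a ^ 2 * G ≤ 1 := by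
    have h := arith_haG ha0 (norm_nonneg g) hagrad
    rwa [← hGdef] at h
  have haGrθ : a ^ 2 * (Gr + Gθ) ≤ 1 := by rw [← hGRθ]; exact haG
  have hCS : 16 * F x ^ 2 ≤ Gr := by
    have h := Finset.sum_mul_sq_le_sq_mul_sq Finset.univ (rOf x) (rOf g)
    rw [heuler, hx1, ← hGr] at h
    exact arith_hCS h
  have haL2 : a * L ≤ 2 := by
    have h := mul_le_mul_of_nonneg_right haL hLpos.le
    rwa [div_mul_cancel₀ _ hLpos.ne'] at h
  -- Hessian quadratic form bound along the segment
  set K : ℝ := L * (Gr / 2 + Gθ / 4) with hKdef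
  have hK : ∀ t ∈ Set.Icc (0 : ℝ) a, (fderiv ℝ (fderiv ℝ F) (x - t • g) g) g ≤ K := by
    intro t ht
    have h2 : 4 * F x * t ≤ 1 / 4 := arith_h2 ht.1 ht.2 hxpos haF
    have hterm : 0 ≤ t ^ 2 * (Gr - 16 * F x ^ 2) :=
      mul_nonneg (sq_nonneg t) (sub_nonneg.2 hCS)
    have hmtpos : 0 < 1 - 8 * F x * t + t ^ 2 * Gr := arith_mtpos h2 hterm
    have hmt2 : 1 - 8 * F x * t + t ^ 2 * Gr ≤ 2 :=
      arith_mt2 ht.1 ht.2 hGrnn hGθnn hxpos.le haGrθ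
    exact quad_bound hF1 hF2 hhomE L hLpos hHess (x - t • g) g _ (msum t) hmtpos hmt2
  have hdesc := descent hF1 hF2 x g a K ha0.le hK
  have hfxg : fderiv ℝ F x g = G := by
    rw [← hgrad_inner g, hGdef, real_inner_self_eq_norm_sq]
  have hKa : K * a ^ 2 / 2 ≤ a * G / 2 := by
    have h := arith_Ka haL2 ha0 hGrnn hGθnn
    rwa [← hKdef, ← hGRθ] at h
  have hFy : F (x - a • g) ≤ F x - a * G / 2 := by
    rw [hfxg] at hdesc
    exact arith_Fy hdesc hKa
  -- rpow arithmetic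
  have hFα : 0 < F x ^ α := Real.rpow_pos_of_pos hxpos α
  have hβ : (0 : ℝ) < 2 - α := by linarith only [hα2]
  have h16 : 16 * F x ^ 2 ≤ μ * F x ^ α := by
    have h1 : F x ^ (2 - α) ≤ μ / 16 := by
      have hr := Real.rpow_le_rpow hxpos.le hsmall hβ.le
      rwa [← Real.rpow_mul (by positivity : (0:ℝ) ≤ μ / 16), inv_mul_cancel₀ hβ.ne',
        Real.rpow_one] at hr
    have h3 : F x ^ (2 : ℕ) = F x ^ (2 - α) * F x ^ α := by
      rw [← Real.rpow_add hxpos, show (2 - α) + α = ((2:ℕ):ℝ) by push_cast; ring,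
        Real.rpow_natCast]
    exact arith_16 h1 hFα h3
  have hPmul : μ * a * F x ^ (α - 1) * F x = μ * a * F x ^ α := by
    have e1 : F x ^ (α - 1) * F x = F x ^ α := by
      nth_rewrite 2 [← Real.rpow_one (F x)]
      rw [← Real.rpow_add hxpos]; norm_num
    calc μ * a * F x ^ (α - 1) * F x = μ * a * (F x ^ (α - 1) * F x) := by ring
      _ = μ * a * F x ^ α := by rw [e1]
  -- conclusion
  set m : ℝ := ∑ i, rOf (x - a • g) i ^ 2 with hmdef
  have hm : m = 1 - 8 * F x * a + a ^ 2 * Gr := msum a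
  have part2 : 0 < 1 - 8 * a * F x := arith_part2 ha0 hxpos haF
  have part1 : 1 - 8 * a * F x ≤ m :=
    arith_part1 hm (mul_nonneg (sq_nonneg a) hGrnn)
  refine ⟨part1, part2, ?_, ?_⟩
  · intro hzero
    have : m = 0 := by
      rw [hmdef]
      apply Finset.sum_eq_zero
      intro i _
      rw [hzero]
      simp
    linarith only [part1, part2, this]
  · have hmpos : 0 < m := lt_of_lt_of_le part2 part1
    have hsq : Real.sqrt m ^ 2 = m := Real.sq_sqrt hmpos.le
    have hc0 : F (toE ((Real.sqrt m)⁻¹ • rOf (x - a • g)) (thOf (x - a • g)))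
        = ((Real.sqrt m)⁻¹) ^ 4 * F (x - a • g) := by
      rw [hhom, toE_rOf]
    have hc4 : ((Real.sqrt m)⁻¹) ^ 4 = (m ^ 2)⁻¹ := by
      rw [inv_pow, show (4:ℕ) = 2 * 2 by norm_num, pow_mul, hsq]
    rw [hc0, hc4, inv_mul_le_iff₀ (by positivity : (0:ℝ) < m ^ 2)]
    have hTF : (1 - μ * a * F x ^ (α - 1)) * F x = F x - μ * a * F x ^ α := by
      rw [sub_mul, one_mul, hPmul]
    rw [hTF]
    have hP4 : 4 * (μ * F x ^ α) ≤ G := by linarith only [hKL]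
    have hfinal := arith_final hFy hP4 h16 (hF0 (x - a • g)) part1 part2 hxpos ha0
    calc F (x - a • g) ≤ m ^ 2 * (F x - a * (μ * F x ^ α)) := hfinal
      _ = m ^ 2 * (F x - μ * a * F x ^ α) := by ring_nf
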